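/- Let F be a k-CNF. If F has a tree-like Res(l) refutation with L leaves, then F has a Resolution refutation of width at most l·⌈log₂ L⌉ + max{k, l}. -/

import Mathlib

/-- Propositional variables. -/
abbrev PVar := ℕ

/-- A literal: a variable together with a sign (`true` = the positive literal `x`,
`false` = the negated literal `¬x`). -/
abbrev PLit := PVar × Bool

/-- Negation of a literal. -/
def PLit.neg (m : PLit) : PLit := (m.1, !m.2)

/-- A clause: a finite set of literals, read as their disjunction.
Its width is its cardinality. -/
abbrev PClause := Finset PLit

/-- A CNF formula: a finite set of clauses, read as their conjunction. -/
abbrev PCnf := Finset PClause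

/-- A term: a finite set of literals, read as their conjunction. -/
abbrev PTerm := Finset PLit

/-- A DNF: a finite set of terms, read as their disjunction. -/
abbrev PDnf := Finset PTerm

/-- `D` is an `l`-DNF: every term of `D` has at most `l` literals. -/
def IsLDnf (l : ℕ) (D : PDnf) : Prop := ∀ T ∈ D, T.card ≤ l

/-- The negation `¬C` of a clause `C = m₁ ∨ … ∨ m_t`, i.e. the term `¬m₁ ∧ … ∧ ¬m_t`. -/
def PClause.negTerm (C : PClause) : PTerm := C.image PLit.neg

/-- A clause viewed as a DNF consisting of singleton terms. -/
def PClause.toDnf (C : PClause) : PDnf := C.image (fun m => ({m} : PTerm))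

/-- The disjunction `¬l₁ ∨ … ∨ ¬l_s` of the negations of the literals of the
term `T = l₁ ∧ … ∧ l_s`, as a DNF of singleton terms. -/
def PTerm.negLits (T : PTerm) : PDnf := T.image (fun m => ({m.neg} : PTerm))

/-- Binary proof trees whose nodes are labelled by DNFs. -/
inductive PTree : Type where
  | leaf (D : PDnf) : PTree
  | node (D : PDnf) (t₁ t₂ : PTree) : PTree

namespace PTree

/-- The label at the root of the tree. -/
def concl : PTree → PDnf
  | .leaf D => D
  | .node D _ _ => D

/-- The number of leaves of the tree. -/
def leaves : PTree → ℕ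
  | .leaf _ => 1
  | .node _ t₁ t₂ => t₁.leaves + t₂.leaves

/-- The total number of nodes (proof lines) of the tree. -/
def size : PTree → ℕ
  | .leaf _ => 1
  | .node _ t₁ t₂ => t₁.size + t₂.size + 1

/-- The list of all labels occurring in the tree. -/
def labels : PTree → List PDnf
  | .leaf D => [D]
  | .node D t₁ t₂ => D :: (t₁.labels ++ t₂.labels)

/-- Structural validity of a tree-like Res derivation from the set `H` of
hypothesis DNFs: every leaf is a hypothesis or an axiom
`(l₁∧…∧l_s) ∨ ¬l₁ ∨ … ∨ ¬l_s` (with `s ≥ 1`), and every internal node with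
children `A ∨ (l₁∧…∧l_s)` and `B ∨ ¬l₁ ∨ … ∨ ¬l_s` is labelled by the
cut `A ∨ B`. -/
def okStruct (H : Finset PDnf) : PTree → Prop
  | .leaf D => D ∈ H ∨ ∃ T : PTerm, T.Nonempty ∧ D = insert T T.negLits
  | .node D t₁ t₂ => t₁.okStruct H ∧ t₂.okStruct H ∧
      ∃ (T : PTerm) (A B : PDnf), T.Nonempty ∧
        t₁.concl = insert T A ∧ t₂.concl = B ∪ T.negLits ∧ D = A ∪ B

/-- A valid tree-like Res(l) derivation from the hypotheses `H`: it is
structurally valid and every proof line is an `l`-DNF. -/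
def valid (H : Finset PDnf) (l : ℕ) (t : PTree) : Prop :=
  t.okStruct H ∧ ∀ D ∈ t.labels, IsLDnf l D

/-- The number of leaves labelled by an axiom rather than by a hypothesis. -/
def axLeafCount (H : Finset PDnf) : PTree → ℕ
  | .leaf D => if D ∈ H then 0 else 1
  | .node _ t₁ t₂ => t₁.axLeafCount H + t₂.axLeafCount H

end PTree

/-- The set of hypothesis DNFs associated to a CNF: each clause read as a DNF
of singleton terms. -/
def PCnf.toHyps (F : PCnf) : Finset PDnf := F.image PClause.toDnf

/-- `t` is a tree-like Res(l) refutation of the CNF `F`: a valid tree-like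
Res(l) derivation from the clauses of `F` whose root is the empty DNF. -/
def TreeResRefutation (F : PCnf) (l : ℕ) (t : PTree) : Prop :=
  t.valid F.toHyps l ∧ t.concl = ∅

/-- Resolution inference: the clause `C` is obtained from two clauses
`A ∨ x` and `B ∨ ¬x` occurring in `prev` by the resolution rule, yielding `A ∨ B`. -/
def ResStep (prev : List PClause) (C : PClause) : Prop :=
  ∃ A ∈ prev, ∃ B ∈ prev, ∃ x : PVar,
    (x, true) ∈ A ∧ (x, false) ∈ B ∧
    C = A.erase (x, true) ∪ B.erase (x, false)

/-- `π` is a resolution derivation from the CNF `F`: every clause of `π`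
belongs to `F` or follows from two earlier clauses by the resolution rule. -/
def IsResDeriv (F : PCnf) (π : List PClause) : Prop :=
  ∀ i : Fin π.length, π.get i ∈ F ∨ ResStep (π.take i) (π.get i)

/-- `π` is a resolution derivation of the clause `C` from the CNF `F`
(its last clause is `C`); a refutation when `C = ∅`. Its size is `π.length`
and its width is the maximum cardinality of a clause in `π`. -/
def ResDerivOf (F : PCnf) (C : PClause) (π : List PClause) : Prop :=
  IsResDeriv F π ∧ π.getLast? = some C

/-- A partial assignment: maps some variables to truth values. -/
abbrev PAssign := PVar → Option Bool

/-- The restriction `F|ρ`: delete every clause containing a literal satisfied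
by `ρ`, and delete from the remaining clauses every literal falsified by `ρ`. -/
def PCnf.restrict (F : PCnf) (ρ : PAssign) : PCnf :=
  (F.filter (fun C => ∀ m ∈ C, ρ m.1 ≠ some m.2)).image
    (fun C => C.filter (fun m => ρ m.1 ≠ some (!m.2)))

section Aux

/-! ### Basic literal lemmas -/

@[simp] lemma PLit.neg_neg (m : PLit) : m.neg.neg = m := by
  cases m with
  | mk x b => simp [PLit.neg]

lemma PLit.neg_injective : Function.Injective PLit.neg := by
  intro a b h
  have := congrArg PLit.neg h
  simpa using this

lemma PLit.neg_ne (m : PLit) : m.neg ≠ m := by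
  cases m with
  | mk x b => cases b <;> simp [PLit.neg]

/-! ### Width-bounded derivability -/

/-- `C` is derivable from `F` by a resolution derivation all of whose clauses
have width at most `c`. -/
inductive DerivB (F : PCnf) (c : ℕ) : PClause → Prop
  | ax {C : PClause} (hC : C ∈ F) (hw : C.card ≤ c) : DerivB F c C
  | res {A B : PClause} (x : PVar) (hA : DerivB F c A) (hB : DerivB F c B)
      (hxA : (x, true) ∈ A) (hxB : (x, false) ∈ B)
      (hw : (A.erase (x, true) ∪ B.erase (x, false)).card ≤ c) :
      DerivB F c (A.erase (x, true) ∪ B.erase (x, false))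

/-- `α` falsifies the clause `C`. -/
def falsifies (α : Finset PLit) (C : PClause) : Prop := ∀ m ∈ C, PLit.neg m ∈ α

/-- `α` is a consistent set of literals. -/
def consistentS (α : Finset PLit) : Prop := ∀ m ∈ α, PLit.neg m ∉ α

/-- The family of consistent partial assignments falsifying no width-`c` derivable
clause (an Atserias–Dalmau style family). -/
def HH (F : PCnf) (c : ℕ) (α : Finset PLit) : Prop :=
  consistentS α ∧ ∀ C : PClause, DerivB F c C → ¬ falsifies α C

lemma HH.mono {F : PCnf} {c : ℕ} {α β : Finset PLit} (hβ : HH F c β) (hαβ : α ⊆ β) :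
    HH F c α := by
  refine ⟨fun m hm hneg => hβ.1 m (hαβ hm) (hαβ hneg), fun C hC hf => hβ.2 C hC ?_⟩
  intro m hm
  exact hαβ (hf m hm)

lemma union_single (α : Finset PLit) (m : PLit) : α ∪ {m} = insert m α := by
  rw [Finset.union_comm, ← Finset.insert_eq]

end Aux
section Aux2

variable {F : PCnf} {c : ℕ}

lemma consistentS_insert {α : Finset PLit} (hα : consistentS α) {m : PLit}
    (h2 : PLit.neg m ∉ α) : consistentS (insert m α) := by
  intro m' hm'
  rcases Finset.mem_insert.mp hm' with rfl | hm'
  · intro hcon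
    rcases Finset.mem_insert.mp hcon with h | h
    · exact PLit.neg_ne m' h
    · exact h2 h
  · intro hcon
    rcases Finset.mem_insert.mp hcon with h | h
    · apply h2
      have : m' = PLit.neg m := by
        have := congrArg PLit.neg h
        simpa using this
      rwa [← this]
    · exact hα m' hm' h

/-- Resolution on an arbitrary literal `m`. -/
lemma DerivB.res_lit {C₀ C₁ : PClause} (hd₀ : DerivB F c C₀) (hd₁ : DerivB F c C₁)
    (m : PLit) (h₀ : m ∈ C₀) (h₁ : PLit.neg m ∈ C₁)
    (hw : (C₀.erase m ∪ C₁.erase (PLit.neg m)).card ≤ c) :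
    DerivB F c (C₀.erase m ∪ C₁.erase (PLit.neg m)) := by
  obtain ⟨x, s⟩ := m
  cases s
  · -- m = (x, false), m.neg = (x,true)
    have hneg : PLit.neg (x, false) = (x, true) := by simp [PLit.neg]
    rw [hneg] at h₁ hw ⊢
    have := DerivB.res x hd₁ hd₀ h₁ h₀ (by rwa [Finset.union_comm] at hw)
    rwa [Finset.union_comm] at this
  · have hneg : PLit.neg (x, true) = (x, false) := by simp [PLit.neg]
    rw [hneg] at h₁ hw ⊢
    exact DerivB.res x hd₀ hd₁ h₀ h₁ hw

/-- The extension property of the family `HH`. -/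
lemma ext_lit {β : Finset PLit} (hβ : HH F c β) (hcard : β.card ≤ c) (m : PLit)
    (h1 : m ∉ β) (h2 : PLit.neg m ∉ β) :
    HH F c (insert m β) ∨ HH F c (insert (PLit.neg m) β) := by
  by_contra hcon
  push_neg at hcon
  obtain ⟨hnm, hnn⟩ := hcon
  -- extract falsified derivable clauses
  have hget : ∀ m' : PLit, PLit.neg m' ∉ β → ¬ HH F c (insert m' β) →
      ∃ C, DerivB F c C ∧ falsifies (insert m' β) C ∧ PLit.neg m' ∈ C := by
    intro m' hm'2 hn
    have hcons : consistentS (insert m' β) := consistentS_insert hβ.1 hm'2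
    have : ¬ ∀ C : PClause, DerivB F c C → ¬ falsifies (insert m' β) C :=
      fun h => hn ⟨hcons, h⟩
    push_neg at this
    obtain ⟨C, hC, hf⟩ := this
    refine ⟨C, hC, hf, ?_⟩
    by_contra hxC
    apply hβ.2 C hC
    intro a ha
    rcases Finset.mem_insert.mp (hf a ha) with h | h
    · exfalso
      apply hxC
      have : a = PLit.neg m' := by
        have := congrArg PLit.neg h
        simpa using this
      rwa [← this]
    · exact h
  obtain ⟨C₀, hd₀, hf₀, hm₀⟩ := hget m h2 hnm
  obtain ⟨C₁, hd₁, hf₁, hm₁⟩ := hget (PLit.neg m) (by simpa using h1) hnn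
  rw [PLit.neg_neg] at hm₁
  -- C₀ contains m.neg, C₁ contains m ; resolve on m (C₁ has m, C₀ has m.neg)
  have hfalsR : falsifies β (C₁.erase m ∪ C₀.erase (PLit.neg m)) := by
    intro a ha
    rcases Finset.mem_union.mp ha with h | h
    · obtain ⟨hne, hmem⟩ := Finset.mem_erase.mp h
      rcases Finset.mem_insert.mp (hf₁ a hmem) with h' | h'
      · exfalso
        apply hne
        have := congrArg PLit.neg h'
        simpa using this
      · exact h'
    · obtain ⟨hne, hmem⟩ := Finset.mem_erase.mp h
      rcases Finset.mem_insert.mp (hf₀ a hmem) with h' | h'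
      · exact absurd (by simpa using congrArg PLit.neg h') hne
      · exact h'
  have hsub : (C₁.erase m ∪ C₀.erase (PLit.neg m)) ⊆ β.image PLit.neg := by
    intro a ha
    have := hfalsR a ha
    exact Finset.mem_image.mpr ⟨PLit.neg a, this, by simp⟩
  have hwR : (C₁.erase m ∪ C₀.erase (PLit.neg m)).card ≤ c := by
    calc (C₁.erase m ∪ C₀.erase (PLit.neg m)).card ≤ (β.image PLit.neg).card :=
          Finset.card_le_card hsub
      _ = β.card := Finset.card_image_of_injective _ PLit.neg_injective
      _ ≤ c := hcard
  exact hβ.2 _ (DerivB.res_lit hd₁ hd₀ m hm₁ hm₀ hwR) hfalsR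

end Aux2
section Aux3

variable {F : PCnf} {c : ℕ}

/-- Forced extension: if every literal of `T` is forced over `α` (extending `α` with its
negation leaves the family), then `α ∪ T` is in the family. -/
lemma force {α : Finset PLit} (T : Finset PLit) (hα : HH F c α)
    (hf : ∀ m ∈ T, ¬ HH F c (insert (PLit.neg m) α))
    (hcard : α.card + T.card ≤ c) : HH F c (α ∪ T) := by
  induction T using Finset.induction_on with
  | empty => simpa using hα
  | @insert m T' hmT' IH =>
    have hf' : ∀ m' ∈ T', ¬ HH F c (insert (PLit.neg m') α) :=
      fun m' h => hf m' (Finset.mem_insert_of_mem h)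
    have hcardi : (insert m T').card = T'.card + 1 := Finset.card_insert_of_notMem hmT'
    have hβ : HH F c (α ∪ T') := IH hf' (by omega)
    rw [Finset.union_insert]
    by_cases h1 : m ∈ α ∪ T'
    · rwa [Finset.insert_eq_self.mpr h1]
    by_cases h2a : PLit.neg m ∈ α
    · exfalso
      have := hf m (Finset.mem_insert_self _ _)
      rw [Finset.insert_eq_self.mpr h2a] at this
      exact this hα
    by_cases h2b : PLit.neg m ∈ T'
    · exfalso
      have fact1 : ¬ HH F c (insert (PLit.neg m) α) := hf m (Finset.mem_insert_self _ _)
      have fact2 : ¬ HH F c (insert m α) := by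
        have := hf (PLit.neg m) (Finset.mem_insert_of_mem h2b)
        rwa [PLit.neg_neg] at this
      have hm1 : m ∉ α := fun h => h1 (Finset.mem_union_left _ h)
      rcases ext_lit hα (by omega) m hm1 h2a with h | h
      · exact fact2 h
      · exact fact1 h
    · -- m and its negation fresh over α ∪ T'
      have hm2 : PLit.neg m ∉ α ∪ T' := by
        intro h
        rcases Finset.mem_union.mp h with h | h
        · exact h2a h
        · exact h2b h
      have hcardβ : (α ∪ T').card ≤ c := by
        have := Finset.card_union_le α T'
        omega
      rcases ext_lit hβ hcardβ m h1 hm2 with h | h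
      · exact h
      · exfalso
        apply hf m (Finset.mem_insert_self _ _)
        exact h.mono (Finset.insert_subset_insert _ Finset.subset_union_left)

end Aux3
section Aux4

variable {F : PCnf} {c : ℕ}

lemma PTree.concl_mem_labels (u : PTree) : u.concl ∈ u.labels := by
  cases u with
  | leaf D => exact List.mem_singleton.mpr rfl
  | node D t₁ t₂ => exact List.mem_cons_self

lemma PTree.leaves_pos (u : PTree) : 1 ≤ u.leaves := by
  induction u with
  | leaf D => exact le_refl 1
  | node D t₁ t₂ ih₁ ih₂ => simp only [PTree.leaves]; omega

/-- The leaf case of the main induction. -/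
lemma leaf_case {k l : ℕ} (hF : ∀ C ∈ F, C.card ≤ k) (hkc : k ≤ c)
    {α : Finset PLit} (hαk : α.card + k ≤ c) (hαl : α.card + l ≤ c) (D : PDnf)
    (hok : D ∈ F.toHyps ∨ ∃ T : PTerm, T.Nonempty ∧ D = insert T T.negLits)
    (hD : IsLDnf l D) (hα : HH F c α)
    (hkill : ∀ T' ∈ D, ¬ HH F c (α ∪ T')) : False := by
  rcases hok with hmem | ⟨T, hTne, rfl⟩
  · obtain ⟨C₀, hC₀F, rfl⟩ := Finset.mem_image.mp hmem
    have facts : ∀ m' ∈ C₀.image PLit.neg, ¬ HH F c (insert (PLit.neg m') α) := by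
      intro m' hm'
      obtain ⟨m, hm, rfl⟩ := Finset.mem_image.mp hm'
      rw [PLit.neg_neg]
      have hmemT : ({m} : PTerm) ∈ C₀.toDnf := Finset.mem_image.mpr ⟨m, hm, rfl⟩
      have := hkill _ hmemT
      rwa [union_single] at this
    have hcd : α.card + (C₀.image PLit.neg).card ≤ c := by
      rw [Finset.card_image_of_injective _ PLit.neg_injective]
      have := hF C₀ hC₀F
      omega
    have hβ := force (F := F) (c := c) (C₀.image PLit.neg) hα facts hcd
    apply hβ.2 C₀ (DerivB.ax hC₀F (le_trans (hF C₀ hC₀F) hkc))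
    intro m hm
    exact Finset.mem_union_right _ (Finset.mem_image_of_mem _ hm)
  · have hTl : T.card ≤ l := hD T (Finset.mem_insert_self _ _)
    have facts : ∀ m ∈ T, ¬ HH F c (insert (PLit.neg m) α) := by
      intro m hm
      have hmemT : ({PLit.neg m} : PTerm) ∈ insert T T.negLits :=
        Finset.mem_insert_of_mem (Finset.mem_image_of_mem _ hm)
      have := hkill _ hmemT
      rwa [union_single] at this
    have hβ := force (F := F) (c := c) T hα facts (by omega)
    exact hkill T (Finset.mem_insert_self _ _) hβ

end Aux4
section Aux5

lemma main_ind {k l : ℕ} (F : PCnf) (hF : ∀ C ∈ F, C.card ≤ k) (B₀ : ℕ) {c : ℕ}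
    (hc : c = l * B₀ + max k l) :
    ∀ (b : ℕ) (u : PTree) (α : Finset PLit),
      u.okStruct F.toHyps → (∀ D ∈ u.labels, IsLDnf l D) →
      u.leaves ≤ 2 ^ b → HH F c α →
      (∀ T' ∈ u.concl, ¬ HH F c (α ∪ T')) →
      α.card + l * b ≤ l * B₀ → False := by
  have hkml : k ≤ max k l := le_max_left k l
  have hlml : l ≤ max k l := le_max_right k l
  intro b
  induction b with
  | zero =>
    intro u α hok hlab hlv hα hkill hcard
    simp only [Nat.mul_zero, Nat.add_zero] at hcard
    cases u with
    | leaf D =>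
      exact leaf_case hF (by omega) (by omega) (by omega) D hok
        (hlab D (List.mem_singleton.mpr rfl)) hα hkill
    | node D t₁ t₂ =>
      have h1 := PTree.leaves_pos t₁
      have h2 := PTree.leaves_pos t₂
      have : (PTree.node D t₁ t₂).leaves = t₁.leaves + t₂.leaves := rfl
      rw [this] at hlv
      simp only [pow_zero] at hlv
      omega
  | succ n ih =>
    intro u
    induction u with
    | leaf D =>
      intro α hok hlab hlv hα hkill hcard
      have hcard' : α.card ≤ l * B₀ := by omega
      exact leaf_case hF (by omega) (by omega) (by omega) D hok
        (hlab D (List.mem_singleton.mpr rfl)) hα hkill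
    | node D t₁ t₂ iht₁ iht₂ =>
      intro α hok hlab hlv hα hkill hcard
      obtain ⟨ok₁, ok₂, T, A, B, hTne, he₁, he₂, heD⟩ := hok
      have hlab₁ : ∀ D' ∈ t₁.labels, IsLDnf l D' := fun D' h =>
        hlab D' (List.mem_cons_of_mem _ (List.mem_append_left _ h))
      have hlab₂ : ∀ D' ∈ t₂.labels, IsLDnf l D' := fun D' h =>
        hlab D' (List.mem_cons_of_mem _ (List.mem_append_right _ h))
      have hTcard : T.card ≤ l := by
        have h₁ := hlab₁ _ (PTree.concl_mem_labels t₁)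
        rw [he₁] at h₁
        exact h₁ T (Finset.mem_insert_self _ _)
      have hl1 : 1 ≤ l := le_trans (Finset.card_pos.mpr hTne) hTcard
      have hlv' : t₁.leaves + t₂.leaves ≤ 2 ^ (n + 1) := hlv
      have hpow : 2 ^ (n + 1) = 2 * 2 ^ n := by rw [pow_succ]; ring
      have hmul : l * (n + 1) = l * n + l := Nat.mul_succ l n
      have hkill' : ∀ T' ∈ A ∪ B, ¬ HH F c (α ∪ T') := by
        intro T' hT'
        apply hkill
        rw [show (PTree.node D t₁ t₂).concl = D from rfl, heD]
        exact hT'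
      by_cases h12 : t₁.leaves ≤ t₂.leaves
      · -- t₁ is the small subtree
        have hlv₁ : t₁.leaves ≤ 2 ^ n := by omega
        have step1 : ∀ m ∈ T, ¬ HH F c (insert (PLit.neg m) α) := by
          intro m hm hcontra
          apply ih t₁ (insert (PLit.neg m) α) ok₁ hlab₁ hlv₁ hcontra ?_ ?_
          · rw [he₁]
            intro T' hT'
            rcases Finset.mem_insert.mp hT' with rfl | hT'
            · intro hHH
              exact hHH.1 m (Finset.mem_union_right _ hm)
                (Finset.mem_union_left _ (Finset.mem_insert_self _ _))
            · intro hHH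
              exact hkill' T' (Finset.mem_union_left _ hT')
                (hHH.mono (Finset.union_subset_union (Finset.subset_insert _ _) subset_rfl))
          · have := Finset.card_insert_le (PLit.neg m) α
            omega
        apply iht₂ α ok₂ hlab₂ (by omega) hα ?_ hcard
        rw [he₂]
        intro T' hT'
        rcases Finset.mem_union.mp hT' with hT' | hT'
        · exact hkill' T' (Finset.mem_union_right _ hT')
        · obtain ⟨m, hm, rfl⟩ := Finset.mem_image.mp hT'
          rw [union_single]
          exact step1 m hm
      · -- t₂ is the small subtree
        have hlv₂ : t₂.leaves ≤ 2 ^ n := by omega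
        have step1' : ¬ HH F c (α ∪ T) := by
          intro hcontra
          apply ih t₂ (α ∪ T) ok₂ hlab₂ hlv₂ hcontra ?_ ?_
          · rw [he₂]
            intro T' hT'
            rcases Finset.mem_union.mp hT' with hT' | hT'
            · intro hHH
              exact hkill' T' (Finset.mem_union_right _ hT')
                (hHH.mono (Finset.union_subset_union Finset.subset_union_left subset_rfl))
            · obtain ⟨m, hm, rfl⟩ := Finset.mem_image.mp hT'
              intro hHH
              apply hHH.1 m
                (Finset.mem_union_left _ (Finset.mem_union_right _ hm))
              exact Finset.mem_union_right _ (Finset.mem_singleton_self _)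
          · have := Finset.card_union_le α T
            omega
        apply iht₁ α ok₁ hlab₁ (by omega) hα ?_ hcard
        rw [he₁]
        intro T' hT'
        rcases Finset.mem_insert.mp hT' with rfl | hT'
        · exact step1'
        · exact hkill' T' (Finset.mem_union_left _ hT')

end Aux5
section Aux6

variable {F : PCnf} {c : ℕ}

lemma resStep_mono {p q : List PClause} (h : ∀ x ∈ p, x ∈ q) {C : PClause} :
    ResStep p C → ResStep q C := by
  rintro ⟨A, hA, B, hB, x, h1, h2, h3⟩
  exact ⟨A, h A hA, B, h B hB, x, h1, h2, h3⟩

lemma take_append_eq (l₁ l₂ : List PClause) (j : ℕ) :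
    (l₁ ++ l₂).take (l₁.length + j) = l₁ ++ l₂.take j := by
  induction l₁ with
  | nil => simp
  | cons a t ih =>
    have h : (a :: t).length + j = (t.length + j) + 1 := by simp; omega
    rw [List.cons_append, h, List.take_succ_cons, ih]
    simp

lemma isResDeriv_append {π₁ π₂ : List PClause}
    (h₁ : IsResDeriv F π₁) (h₂ : IsResDeriv F π₂) : IsResDeriv F (π₁ ++ π₂) := by
  intro i
  have hi : i.1 < π₁.length + π₂.length := by
    have := i.2; simpa using this
  rcases lt_or_ge i.1 π₁.length with h | h
  · have hget : (π₁ ++ π₂).get i = π₁.get ⟨i.1, h⟩ := by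
      simp [List.get_eq_getElem, List.getElem_append_left h]
    rw [hget]
    rcases h₁ ⟨i.1, h⟩ with hl | hr
    · exact Or.inl hl
    · right
      have heq : (π₁ ++ π₂).take i.1 = π₁.take ↑i := List.take_append_of_le_length (le_of_lt h)
      rw [heq]
      exact hr
  · obtain ⟨j, hj⟩ : ∃ j, i.1 = π₁.length + j := ⟨i.1 - π₁.length, by omega⟩
    have hjlt : j < π₂.length := by omega
    have hget : (π₁ ++ π₂).get i = π₂.get ⟨j, hjlt⟩ := by
      simp only [List.get_eq_getElem]
      rw [List.getElem_append_right h]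
      congr 1
      omega
    rw [hget]
    rcases h₂ ⟨j, hjlt⟩ with hl | hr
    · exact Or.inl hl
    · right
      have heq : (π₁ ++ π₂).take i.1 = π₁ ++ π₂.take j := by
        rw [hj]; exact take_append_eq _ _ _
      rw [heq]
      exact resStep_mono (fun x hx => List.mem_append_right _ hx) hr

lemma isResDeriv_snoc {π : List PClause} {C : PClause}
    (h : IsResDeriv F π) (hC : C ∈ F ∨ ResStep π C) : IsResDeriv F (π ++ [C]) := by
  intro i
  have hi : i.1 < π.length + 1 := by
    have := i.2; simpa using this
  rcases lt_or_ge i.1 π.length with hlt | hge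
  · have hget : (π ++ [C]).get i = π.get ⟨i.1, hlt⟩ := by
      simp [List.get_eq_getElem, List.getElem_append_left hlt]
    rw [hget]
    rcases h ⟨i.1, hlt⟩ with hl | hr
    · exact Or.inl hl
    · right
      have heq : (π ++ [C]).take i.1 = π.take ↑i := List.take_append_of_le_length (le_of_lt hlt)
      rw [heq]
      exact hr
  · have hieq : i.1 = π.length := by omega
    have hget : (π ++ [C]).get i = C := by
      simp only [List.get_eq_getElem]
      rw [List.getElem_append_right hge]
      simp [hieq]
    rw [hget]
    have heq : (π ++ [C]).take i.1 = π := by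
      rw [hieq]
      rw [List.take_append_of_le_length (le_refl _), List.take_length]
    rcases hC with hl | hr
    · exact Or.inl hl
    · right; rw [heq]; exact hr

lemma mem_of_getLast? {π : List PClause} {C : PClause} (h : π.getLast? = some C) :
    C ∈ π := by
  cases π with
  | nil => simp at h
  | cons a t =>
    have := List.getLast?_eq_getLast (l := a :: t) (by simp)
    rw [this] at h
    have : C = (a :: t).getLast (by simp) := by
      injection h with h'
      exact h'.symm
    rw [this]
    exact List.getLast_mem _

lemma derivb_to_list {C : PClause} (hd : DerivB F c C) :
    ∃ π : List PClause, IsResDeriv F π ∧ π.getLast? = some C ∧ ∀ D ∈ π, D.card ≤ c := by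
  induction hd with
  | @ax C hC hw =>
    refine ⟨[C], ?_, by simp, ?_⟩
    · intro i
      have h0 : i.1 = 0 := by
        have h1 := i.2
        have h2 : ([C] : List PClause).length = 1 := rfl
        omega
      left
      have hieq : i = ⟨0, by simp⟩ := Fin.ext h0
      rw [hieq]
      exact hC
    · intro D hD
      rw [List.mem_singleton] at hD
      rwa [hD]
  | @res A B x hA hB hxA hxB hw ihA ihB =>
    obtain ⟨π₁, h₁, hl₁, hw₁⟩ := ihA
    obtain ⟨π₂, h₂, hl₂, hw₂⟩ := ihB
    have happ := isResDeriv_append h₁ h₂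
    have hstep : ResStep (π₁ ++ π₂) (A.erase (x, true) ∪ B.erase (x, false)) :=
      ⟨A, List.mem_append_left _ (mem_of_getLast? hl₁),
       B, List.mem_append_right _ (mem_of_getLast? hl₂), x, hxA, hxB, rfl⟩
    refine ⟨(π₁ ++ π₂) ++ [A.erase (x, true) ∪ B.erase (x, false)],
      isResDeriv_snoc happ (Or.inr hstep), ?_, ?_⟩
    · rw [List.getLast?_concat]
    · intro D hD
      rcases List.mem_append.mp hD with hD | hD
      · rcases List.mem_append.mp hD with hD | hD
        · exact hw₁ D hD
        · exact hw₂ D hD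
      · rw [List.mem_singleton] at hD
        rwa [hD]

end Aux6
/-- If a `k`-CNF `F` has a tree-like Res(l) refutation with `L` leaves,
then `F` has a resolution refutation of width at most `l·⌈log₂ L⌉ + max k l`. -/
theorem narrow_res_of_tree_res
    (k l L : ℕ) (F : PCnf) (hF : ∀ C ∈ F, C.card ≤ k)
    (t : PTree) (ht : TreeResRefutation F l t) (hL : t.leaves = L) :
    ∃ π : List PClause, ResDerivOf F ∅ π ∧
      ∀ C ∈ π, C.card ≤ l * Nat.clog 2 L + max k l := by
  set c := l * Nat.clog 2 L + max k l with hc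
  by_cases hder : DerivB F c ∅
  · obtain ⟨π, h1, h2, h3⟩ := derivb_to_list hder
    exact ⟨π, ⟨h1, h2⟩, h3⟩
  · exfalso
    have hH : HH F c ∅ := by
      constructor
      · intro m hm
        simp at hm
      · intro C hd hf
        apply hder
        have hCe : C = ∅ := by
          apply Finset.eq_empty_of_forall_notMem
          intro m hm
          have := hf m hm
          simp at this
        rwa [hCe] at hd
    apply main_ind F hF (Nat.clog 2 L) hc (Nat.clog 2 L) t ∅ ht.1.1 ht.1.2 ?_ hH ?_ ?_
    · rw [hL]
      exact Nat.le_pow_clog one_lt_two L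
    · rw [ht.2]
      intro T' hT'
      simp at hT'
    · simp
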